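/- Let G be a connected bipartite simple graph with vertex set {1,...,n} and bipartition ({1,...,r},{r+1,...,n}). Then the set of G-indecomposable points in ℝP_+^{n-1} consists exactly of the points [±u_{I,J}], where u_{I,J} = ((|I|+|J|)/n)·(−Σ_{i=1}^r f_i + Σ_{i=r+1}^n f_i) + Σ_{i∈I} f_i − Σ_{j∈J} f_j, and I ⊆ {1,...,r}, J ⊆ {r+1,...,n} are sets such that the induced subgraph of G on I ∪ J and the induced subgraph of G on ({1,...,r}\I) ∪ ({r+1,...,n}\J) are both connected. -/

import Mathlib

open scoped Classical

noncomputable section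

/-- The standard inner product on `ℝ^n`. -/
def dotR {n : ℕ} (u v : Fin n → ℝ) : ℝ := ∑ i, u i * v i

/-- `[u] = [u']` : positive equivalence of nonzero vectors (`u' = r • u` with `r > 0`). -/
def PosEq {n : ℕ} (u u' : Fin n → ℝ) : Prop := ∃ r : ℝ, 0 < r ∧ u' = r • u

/-- `u` is decomposable with respect to the set of vectors `S`. -/
def Decomp {n : ℕ} (S : Set (Fin n → ℝ)) (u : Fin n → ℝ) : Prop :=
  ∃ u' u'' : Fin n → ℝ, u' ≠ 0 ∧ u'' ≠ 0 ∧
    u' ∈ Submodule.span ℝ S ∧ u'' ∈ Submodule.span ℝ S ∧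
    u = u' + u'' ∧ ¬ PosEq u u' ∧ ¬ PosEq u u'' ∧
    ∀ x ∈ S, 0 ≤ dotR u' x * dotR u'' x

/-- `u` is indecomposable with respect to the set of vectors `S`. -/
def Indecomp {n : ℕ} (S : Set (Fin n → ℝ)) (u : Fin n → ℝ) : Prop :=
  u ≠ 0 ∧ u ∈ Submodule.span ℝ S ∧ ¬ Decomp S u

/-- The column `v(e) = f_i + f_j` of the incidence matrix corresponding to an edge
`e = ij`. -/
def edgeVec {n : ℕ} (e : Sym2 (Fin n)) : Fin n → ℝ := fun k => if k ∈ e then 1 else 0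

/-- The set of columns of the incidence matrix of `G`. -/
def edgeVecs {n : ℕ} (G : SimpleGraph (Fin n)) : Set (Fin n → ℝ) := edgeVec '' G.edgeSet

/-- The vector `u_{I,J} = ((|I|+|J|)/n)(-∑_{i<r} f_i + ∑_{i≥r} f_i) + ∑_{i∈I} f_i -
∑_{j∈J} f_j`, for the bipartition of `{0,…,n-1}` into `{i < r}` and `{i ≥ r}`. -/
def uIJ {n : ℕ} (r : ℕ) (I J : Finset (Fin n)) : Fin n → ℝ := fun k =>
  ((I.card + J.card : ℝ) / n) * (if (k : ℕ) < r then -1 else 1) +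
    (if k ∈ I then 1 else 0) - (if k ∈ J then 1 else 0)


section Aux
variable {n : ℕ}

/-- the sign vector of the bipartition -/
def eta (r : ℕ) (k : Fin n) : ℝ := if (k : ℕ) < r then 1 else -1

lemma eta_mul_self (r : ℕ) (k : Fin n) : eta r k * eta r k = 1 := by
  unfold eta; split <;> norm_num

lemma eta_ne_zero (r : ℕ) (k : Fin n) : eta r k ≠ 0 := by
  unfold eta; split <;> norm_num

def phi (r : ℕ) (u : Fin n → ℝ) : ℝ := ∑ k, u k * eta r k

lemma phi_add (r : ℕ) (u v : Fin n → ℝ) : phi r (u + v) = phi r u + phi r v := by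
  simp [phi, add_mul, Finset.sum_add_distrib]

lemma phi_smul (r : ℕ) (c : ℝ) (u : Fin n → ℝ) : phi r (c • u) = c * phi r u := by
  simp [phi, Finset.mul_sum, mul_assoc]

lemma phi_sub (r : ℕ) (u v : Fin n → ℝ) : phi r (u - v) = phi r u - phi r v := by
  simp [phi, sub_mul, Finset.sum_sub_distrib]

lemma phi_neg (r : ℕ) (u : Fin n → ℝ) : phi r (-u) = - phi r u := by
  simp [phi, Finset.sum_neg_distrib]

lemma dot_edgeVec (u : Fin n → ℝ) (i j : Fin n) (hij : i ≠ j) :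
    dotR u (edgeVec s(i,j)) = u i + u j := by
  unfold dotR edgeVec
  have : ∀ k : Fin n, u k * (if k ∈ s(i,j) then (1:ℝ) else 0)
      = (if k = i then u k else 0) + (if k = j then u k else 0) := by
    intro k
    by_cases hki : k = i
    · subst hki; simp [Sym2.mem_iff, hij]
    · by_cases hkj : k = j
      · subst hkj; simp [Sym2.mem_iff, hki]
      · simp [Sym2.mem_iff, hki, hkj]
  rw [Finset.sum_congr rfl (fun k _ => this k), Finset.sum_add_distrib]
  simp

lemma dotR_comm (u v : Fin n → ℝ) : dotR u v = dotR v u := by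
  simp [dotR, mul_comm]

lemma dotR_add_left (u v w : Fin n → ℝ) : dotR (u + v) w = dotR u w + dotR v w := by
  simp [dotR, add_mul, Finset.sum_add_distrib]

lemma dotR_sub_left (u v w : Fin n → ℝ) : dotR (u - v) w = dotR u w - dotR v w := by
  simp [dotR, sub_mul, Finset.sum_sub_distrib]

lemma dotR_smul_left (c : ℝ) (u w : Fin n → ℝ) : dotR (c • u) w = c * dotR u w := by
  simp [dotR, Finset.mul_sum, mul_assoc]

lemma dotR_self_eq_zero {u : Fin n → ℝ} (h : dotR u u = 0) : u = 0 := by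
  have h0 : ∀ k ∈ Finset.univ, (0:ℝ) ≤ u k * u k := fun k _ => mul_self_nonneg _
  have := (Finset.sum_eq_zero_iff_of_nonneg h0).mp h
  funext k
  exact mul_self_eq_zero.mp (this k (Finset.mem_univ k))

/-- constancy of a function along reachability -/
lemma const_of_reachable {V : Type*} {G' : SimpleGraph V} {f : V → ℝ}
    (h : ∀ i j, G'.Adj i j → f i = f j) {x y : V} (hxy : G'.Reachable x y) :
    f x = f y := by
  obtain ⟨p⟩ := hxy
  induction p with
  | nil => rfl
  | cons ha _ ih => exact (h _ _ ha).trans ih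

/-- a walk in a subgraph whose adjacency preserves a set `C` gives reachability in the induced graph -/
lemma reach_induce {V : Type*} {G G0 : SimpleGraph V}
    (hsub : ∀ ⦃i j⦄, G0.Adj i j → G.Adj i j) {C : Set V}
    (hcl : ∀ ⦃i j⦄, G0.Adj i j → i ∈ C → j ∈ C) {x y : V} (p : G0.Walk x y) :
    ∀ (hx : x ∈ C), ∃ hy : y ∈ C, (G.induce C).Reachable ⟨x, hx⟩ ⟨y, hy⟩ := by
  induction p with
  | nil => exact fun hx => ⟨hx, SimpleGraph.Reachable.refl _⟩
  | @cons a b c hab p ih =>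
      intro ha
      have hb : b ∈ C := hcl hab ha
      obtain ⟨hy, hr⟩ := ih hb
      refine ⟨hy, SimpleGraph.Reachable.trans ?_ hr⟩
      exact SimpleGraph.Adj.reachable (by simpa using hsub hab)

/-- existence of a crossing edge -/
lemma exists_cross {V : Type*} {G : SimpleGraph V} {S : Set V} {x y : V}
    (p : G.Walk x y) (hx : x ∈ S) (hy : y ∉ S) :
    ∃ i j, G.Adj i j ∧ i ∈ S ∧ j ∉ S := by
  induction p with
  | nil => exact absurd hx hy
  | @cons a b c hab p ih =>
      by_cases hb : b ∈ S
      · exact ih hb hy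
      · exact ⟨a, b, hab, hx, hb⟩

end Aux

section Span
variable {n : ℕ} {r : ℕ} {G : SimpleGraph (Fin n)}

/-- unpack a member of `edgeVecs` -/
lemma edgeVecs_mem_iff {x : Fin n → ℝ} :
    x ∈ edgeVecs G ↔ ∃ i j, G.Adj i j ∧ x = edgeVec s(i,j) := by
  constructor
  · rintro ⟨e, he, rfl⟩
    induction e with
    | _ i j => exact ⟨i, j, he, rfl⟩
  · rintro ⟨i, j, hij, rfl⟩
    exact ⟨s(i,j), hij, rfl⟩

lemma edgeVec_eq_single {i j : Fin n} (hij : i ≠ j) :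
    edgeVec s(i,j) = Pi.single i (1:ℝ) + Pi.single j 1 := by
  funext k
  by_cases hki : k = i
  · subst hki; simp [edgeVec, Sym2.mem_iff, Pi.single_apply, hij]
  · by_cases hkj : k = j
    · subst hkj; simp [edgeVec, Sym2.mem_iff, hki, Pi.single_apply, (Ne.symm hki)]
    · simp [edgeVec, Sym2.mem_iff, hki, hkj, Pi.single_apply, Ne.symm hki, Ne.symm hkj]

/-- the linear functional `phi` -/
def phiL (n r : ℕ) : (Fin n → ℝ) →ₗ[ℝ] ℝ where
  toFun := phi r
  map_add' u v := by simp [phi, add_mul, Finset.sum_add_distrib]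
  map_smul' c u := by simp [phi, Finset.mul_sum, mul_assoc]

lemma eta_add_eta {i j : Fin n} (hbip : ∀ i j : Fin n, G.Adj i j → ((i : ℕ) < r ↔ ¬ (j : ℕ) < r))
    (hij : G.Adj i j) : eta r i + eta r j = 0 := by
  have := hbip i j hij
  unfold eta
  by_cases h : (i : ℕ) < r
  · simp [h, (this.mp h)]
  · simp [h, not_not.mp (fun hj => h (this.mpr hj))]
  
lemma mem_span_edgeVecs_iff
    (hconn : G.Connected)
    (hbip : ∀ i j : Fin n, G.Adj i j → ((i : ℕ) < r ↔ ¬ (j : ℕ) < r))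
    (u : Fin n → ℝ) :
    u ∈ Submodule.span ℝ (edgeVecs G) ↔ phi r u = 0 := by
  constructor
  · intro hu
    have hle : Submodule.span ℝ (edgeVecs G) ≤ LinearMap.ker (phiL n r) := by
      rw [Submodule.span_le]
      rintro x hx
      obtain ⟨i, j, hij, rfl⟩ := edgeVecs_mem_iff.mp hx
      have : phi r (edgeVec s(i,j)) = eta r i + eta r j := by
        rw [edgeVec_eq_single hij.ne]
        simp only [phi]
        have : ∀ k : Fin n, ((Pi.single i 1 + Pi.single j 1 : Fin n → ℝ)) k * eta r k
            = (if k = i then eta r k else 0) + (if k = j then eta r k else 0) := by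
          intro k
          by_cases hki : k = i
          · subst hki; simp [Pi.single_apply, hij.ne]
          · by_cases hkj : k = j
            · subst hkj; simp [Pi.single_apply, hki, Ne.symm hki]
            · simp [Pi.single_apply, hki, hkj]
        rw [Finset.sum_congr rfl (fun k _ => this k), Finset.sum_add_distrib]
        simp
      have hz : phi r (edgeVec s(i,j)) = 0 := by
        rw [this]; exact eta_add_eta hbip hij
      exact LinearMap.mem_ker.mpr hz
    exact LinearMap.mem_ker.mp (hle hu)
  · intro hphi
    by_contra hu
    obtain ⟨f, hfu, hmap⟩ := Submodule.exists_dual_map_eq_bot_of_notMem hu inferInstance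
    set w : Fin n → ℝ := fun k => f (Pi.single k 1) with hw
    have hfval : ∀ v : Fin n → ℝ, f v = ∑ k, v k * w k := by
      intro v
      have hv : v = ∑ k, (v k) • (Pi.single k 1 : Fin n → ℝ) := by
        have := Finset.univ_sum_single v
        rw [← this]
        refine Finset.sum_congr rfl (fun k _ => ?_)
        funext l
        by_cases h : l = k <;> simp [Pi.single_apply, h]
      conv_lhs => rw [hv]
      rw [map_sum]
      refine Finset.sum_congr rfl (fun k _ => ?_)
      rw [map_smul]
      simp [hw, smul_eq_mul, mul_comm]
    have hker : ∀ x ∈ Submodule.span ℝ (edgeVecs G), f x = 0 := by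
      intro x hx
      have : f x ∈ Submodule.map f (Submodule.span ℝ (edgeVecs G)) := ⟨x, hx, rfl⟩
      rw [hmap] at this
      simpa using this
    -- w alternates on edges
    have hedge : ∀ i j, G.Adj i j → w i + w j = 0 := by
      intro i j hij
      have hx : edgeVec s(i,j) ∈ Submodule.span ℝ (edgeVecs G) :=
        Submodule.subset_span (edgeVecs_mem_iff.mpr ⟨i, j, hij, rfl⟩)
      have := hker _ hx
      rw [edgeVec_eq_single hij.ne, map_add] at this
      simpa [hw] using this
    have halt : ∀ i j : Fin n, G.Adj i j → w i * eta r i = w j * eta r j := by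
      intro i j hij
      have h1 : w j = - w i := by linarith [hedge i j hij]
      have h2 : eta r j = - eta r i := by
        have := eta_add_eta hbip hij; linarith
      rw [h1, h2]; ring
    have hnonempty : Nonempty (Fin n) := hconn.nonempty
    obtain ⟨k0⟩ := hnonempty
    have hconst : ∀ k, w k * eta r k = w k0 * eta r k0 := by
      intro k
      exact const_of_reachable halt (hconn.preconnected k k0)
    have hwk : ∀ k, w k = (w k0 * eta r k0) * eta r k := by
      intro k
      have h1 := hconst k
      have h2 : eta r k * eta r k = 1 := eta_mul_self r k
      calc w k = w k * (eta r k * eta r k) := by rw [h2]; ring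
        _ = (w k * eta r k) * eta r k := by ring
        _ = (w k0 * eta r k0) * eta r k := by rw [h1]
    have : f u = (w k0 * eta r k0) * phi r u := by
      rw [hfval u, phi, Finset.mul_sum]
      exact Finset.sum_congr rfl (fun k _ => by rw [hwk k]; ring)
    rw [hphi, mul_zero] at this
    exact hfu this

end Span

section DecompLemmas
variable {n : ℕ} {r : ℕ} {G : SimpleGraph (Fin n)}

/-- If a vector compatible with the zero-set of `u` but not a multiple of `u` exists,
then `u` is decomposable. -/
lemma decomp_of_extra {u w : Fin n → ℝ}
    (hu : u ∈ Submodule.span ℝ (edgeVecs G)) (hw : w ∈ Submodule.span ℝ (edgeVecs G))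
    (hune : u ≠ 0)
    (hcompat : ∀ i j, G.Adj i j → u i + u j = 0 → w i + w j = 0)
    (hnm : ∀ t : ℝ, w ≠ t • u) :
    Decomp (edgeVecs G) u := by
  classical
  -- the edge finset is nonempty
  have hFne : G.edgeFinset.Nonempty := by
    by_contra hF
    rw [Finset.not_nonempty_iff_eq_empty] at hF
    have hE : G.edgeSet = ∅ := by
      have := SimpleGraph.coe_edgeFinset G
      rw [hF] at this; simpa using this.symm
    have : edgeVecs G = ∅ := by simp [edgeVecs, hE]
    rw [this, Submodule.span_empty, Submodule.mem_bot] at hu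
    exact hune hu
  set f : Sym2 (Fin n) → ℝ := fun e =>
    if dotR u (edgeVec e) = 0 then 1
    else |dotR u (edgeVec e)| / (2 * (|dotR w (edgeVec e)| + 1)) with hf
  set ε : ℝ := G.edgeFinset.inf' hFne f with hε
  have hεpos : 0 < ε := by
    rw [hε, Finset.lt_inf'_iff]
    intro e _
    rw [hf]
    by_cases h : dotR u (edgeVec e) = 0
    · simp [h]
    · simp only [h, if_false]
      apply div_pos (abs_pos.mpr h)
      positivity
  have key : ∀ e ∈ G.edgeSet, |ε * dotR w (edgeVec e)| ≤ |dotR u (edgeVec e)| / 2 := by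
    intro e he
    have heF : e ∈ G.edgeFinset := SimpleGraph.mem_edgeFinset.mpr he
    by_cases h : dotR u (edgeVec e) = 0
    · -- then dotR w (edgeVec e) = 0
      obtain ⟨i, j, hij, hx⟩ : ∃ i j, G.Adj i j ∧ e = s(i,j) := by
        induction e with
        | _ i j => exact ⟨i, j, he, rfl⟩
      have hu0 : u i + u j = 0 := by
        rw [← dot_edgeVec u i j hij.ne, ← hx]; exact h
      have hw0 : w i + w j = 0 := hcompat i j hij hu0
      have : dotR w (edgeVec e) = 0 := by
        rw [hx, dot_edgeVec w i j hij.ne]; exact hw0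
      rw [this, h]; simp
    · have hle : ε ≤ f e := Finset.inf'_le f heF
      rw [hf] at hle
      simp only [h, if_false] at hle
      set a := dotR u (edgeVec e)
      set b := dotR w (edgeVec e)
      have hb : (0:ℝ) ≤ |b| := abs_nonneg b
      have ha : (0:ℝ) < |a| := abs_pos.mpr h
      have h1 : ε * (2 * (|b| + 1)) ≤ |a| :=
        (le_div_iff₀ (by positivity : (0:ℝ) < 2 * (|b|+1))).mp hle
      rw [abs_mul, abs_of_pos hεpos]
      nlinarith
  refine ⟨(2:ℝ)⁻¹ • u + ε • w, (2:ℝ)⁻¹ • u - ε • w, ?_, ?_, ?_, ?_, ?_, ?_, ?_, ?_⟩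
  · -- u' ≠ 0
    intro h0
    apply hnm (-(2*ε)⁻¹)
    funext k
    have := congrFun h0 k
    simp only [Pi.add_apply, Pi.smul_apply, smul_eq_mul, Pi.zero_apply] at this
    simp only [Pi.smul_apply, smul_eq_mul]
    field_simp at this ⊢
    nlinarith [this, hεpos]
  · intro h0
    apply hnm ((2*ε)⁻¹)
    funext k
    have := congrFun h0 k
    simp only [Pi.sub_apply, Pi.smul_apply, smul_eq_mul, Pi.zero_apply] at this
    simp only [Pi.smul_apply, smul_eq_mul]
    field_simp at this ⊢
    nlinarith [this, hεpos]
  · exact Submodule.add_mem _ (Submodule.smul_mem _ _ hu) (Submodule.smul_mem _ _ hw)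
  · exact Submodule.sub_mem _ (Submodule.smul_mem _ _ hu) (Submodule.smul_mem _ _ hw)
  · funext k; simp only [Pi.add_apply, Pi.sub_apply, Pi.smul_apply, smul_eq_mul]; ring
  · rintro ⟨ρ, hρ, hρeq⟩
    apply hnm (ε⁻¹ * (ρ - 2⁻¹))
    funext k
    have := congrFun hρeq k
    simp only [Pi.add_apply, Pi.smul_apply, smul_eq_mul] at this
    simp only [Pi.smul_apply, smul_eq_mul]
    field_simp at this ⊢
    nlinarith [this, hεpos]
  · rintro ⟨ρ, hρ, hρeq⟩
    apply hnm (ε⁻¹ * (2⁻¹ - ρ))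
    funext k
    have := congrFun hρeq k
    simp only [Pi.sub_apply, Pi.smul_apply, smul_eq_mul] at this
    simp only [Pi.smul_apply, smul_eq_mul]
    field_simp at this ⊢
    nlinarith [this, hεpos]
  · intro x hx
    obtain ⟨e, he, rfl⟩ := hx
    have hk := key e he
    rw [dotR_add_left, dotR_sub_left, dotR_smul_left, dotR_smul_left]
    set a := dotR u (edgeVec e)
    set b := dotR w (edgeVec e)
    have h2 : |ε * b| ≤ |a| / 2 := hk
    have h3 : (ε*b)^2 ≤ (a/2)^2 := by
      have := abs_nonneg (ε*b)
      nlinarith [sq_abs (ε*b), sq_abs a]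
    nlinarith [h3]

/-- rigidity implies indecomposability -/
lemma not_decomp_of_rigid {u : Fin n → ℝ}
    (hu : u ∈ Submodule.span ℝ (edgeVecs G)) (hune : u ≠ 0)
    (hrig : ∀ u', u' ∈ Submodule.span ℝ (edgeVecs G) →
      (∀ i j, G.Adj i j → u i + u j = 0 → u' i + u' j = 0) → ∃ t : ℝ, u' = t • u) :
    ¬ Decomp (edgeVecs G) u := by
  rintro ⟨u', u'', h1, h2, hm', hm'', heq, hp', hp'', hsign⟩
  -- on zero-edges of u, both summands vanish
  have hcompat : ∀ v, (v = u' ∨ v = u'') →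
      ∀ i j, G.Adj i j → u i + u j = 0 → v i + v j = 0 := by
    intro v hv i j hij h0
    have hx : edgeVec s(i,j) ∈ edgeVecs G := ⟨s(i,j), hij, rfl⟩
    have hsum : dotR u' (edgeVec s(i,j)) + dotR u'' (edgeVec s(i,j)) = 0 := by
      rw [dot_edgeVec _ _ _ hij.ne, dot_edgeVec _ _ _ hij.ne]
      have h1 := congrFun heq i
      have h2 := congrFun heq j
      simp only [Pi.add_apply] at h1 h2
      linarith
    have hprod := hsign _ hx
    have ha : dotR u' (edgeVec s(i,j)) = 0 := by nlinarith
    have hb : dotR u'' (edgeVec s(i,j)) = 0 := by linarith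
    rcases hv with rfl | rfl
    · rw [← dot_edgeVec v i j hij.ne]; exact ha
    · rw [← dot_edgeVec v i j hij.ne]; exact hb
  obtain ⟨t', ht'⟩ := hrig u' hm' (hcompat u' (Or.inl rfl))
  obtain ⟨t'', ht''⟩ := hrig u'' hm'' (hcompat u'' (Or.inr rfl))
  -- pick some coordinate where u is nonzero
  obtain ⟨k0, hk0⟩ : ∃ k, u k ≠ 0 := by
    by_contra hk
    push_neg at hk
    exact hune (funext fun k => hk k)
  have htsum : t' + t'' = 1 := by
    have := congrFun heq k0
    rw [ht', ht''] at this
    simp only [Pi.add_apply, Pi.smul_apply, smul_eq_mul] at this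
    have : u k0 = t' * u k0 + t'' * u k0 := this
    have h2 : (t' + t'' - 1) * u k0 = 0 := by ring_nf; linarith [this]
    rcases mul_eq_zero.mp h2 with h | h
    · linarith
    · exact absurd h hk0
  -- find an edge where u doesn't vanish
  obtain ⟨e, he, hde⟩ : ∃ e ∈ G.edgeSet, dotR u (edgeVec e) ≠ 0 := by
    by_contra hall
    push_neg at hall
    -- then u is orthogonal to all edge vectors, hence to itself
    have : ∀ x ∈ edgeVecs G, dotR x u = 0 := by
      rintro x ⟨e, he, rfl⟩
      rw [dotR_comm]; exact hall e he
    set D : (Fin n → ℝ) →ₗ[ℝ] ℝ :=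
      { toFun := fun x => dotR x u,
        map_add' := fun x y => dotR_add_left x y u,
        map_smul' := fun c x => dotR_smul_left c x u } with hD
    have hle : Submodule.span ℝ (edgeVecs G) ≤ LinearMap.ker D := by
      rw [Submodule.span_le]; intro x hx
      simp only [SetLike.mem_coe, LinearMap.mem_ker]
      exact this x hx
    have : dotR u u = 0 := hle hu
    exact hune (dotR_self_eq_zero this)
  have hnz : t' ≠ 0 := by
    rintro rfl; rw [zero_smul] at ht'; exact h1 ht'
  have hnz' : t'' ≠ 0 := by
    rintro rfl; rw [zero_smul] at ht''; exact h2 ht''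
  have hprod := hsign _ ⟨e, he, rfl⟩
  rw [ht', ht'', dotR_smul_left, dotR_smul_left] at hprod
  have hpp : 0 ≤ t' * t'' := by
    have hd2 : 0 < (dotR u (edgeVec e))^2 := by positivity
    nlinarith [hd2]
  have ht'pos : 0 < t' := by
    rcases lt_or_gt_of_ne hnz with h | h
    · exfalso
      have : t'' < 0 := by nlinarith
      linarith
    · exact h
  exact hp' ⟨t', ht'pos, ht'⟩

end DecompLemmas

section UIJ
variable {n : ℕ} {r : ℕ} {G : SimpleGraph (Fin n)}

def S1set {n : ℕ} (I J : Finset (Fin n)) : Set (Fin n) := ↑I ∪ ↑J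
def S2set {n : ℕ} (r : ℕ) (I J : Finset (Fin n)) : Set (Fin n) :=
  ({k : Fin n | (k : ℕ) < r} \ ↑I) ∪ ({k : Fin n | ¬ (k : ℕ) < r} \ ↑J)

variable {I J : Finset (Fin n)}

lemma notmem_J_of_lt (hJ : ∀ j ∈ J, ¬ (j : ℕ) < r) {k : Fin n} (hk : (k : ℕ) < r) : k ∉ J :=
  fun h => hJ k h hk

lemma notmem_I_of_not_lt (hI : ∀ i ∈ I, (i : ℕ) < r) {k : Fin n} (hk : ¬ (k : ℕ) < r) : k ∉ I :=
  fun h => hk (hI k h)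

lemma mem_S2set_iff (hI : ∀ i ∈ I, (i : ℕ) < r) (hJ : ∀ j ∈ J, ¬ (j : ℕ) < r) (k : Fin n) :
    k ∈ S2set r I J ↔ k ∉ I ∧ k ∉ J := by
  unfold S2set
  by_cases hk : (k : ℕ) < r
  · simp only [Set.mem_union, Set.mem_diff, Set.mem_setOf_eq, hk, not_true_eq_false,
      true_and, false_and, or_false, Finset.mem_coe]
    exact ⟨fun h => ⟨h, notmem_J_of_lt hJ hk⟩, fun h => h.1⟩
  · simp only [Set.mem_union, Set.mem_diff, Set.mem_setOf_eq, hk, not_false_eq_true,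
      true_and, false_and, false_or, Finset.mem_coe]
    exact ⟨fun h => ⟨notmem_I_of_not_lt hI hk, h⟩, fun h => h.2⟩

lemma mem_S1set_iff (k : Fin n) : k ∈ S1set I J ↔ k ∈ I ∨ k ∈ J := by
  simp [S1set]

lemma S2set_eq_compl (hI : ∀ i ∈ I, (i : ℕ) < r) (hJ : ∀ j ∈ J, ¬ (j : ℕ) < r) :
    S2set r I J = (S1set I J)ᶜ := by
  ext k
  rw [mem_S2set_iff hI hJ, Set.mem_compl_iff, mem_S1set_iff]
  tauto

-- values of uIJ
lemma uIJ_apply_mem_I (hI : ∀ i ∈ I, (i : ℕ) < r) (hJ : ∀ j ∈ J, ¬ (j : ℕ) < r)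
    {k : Fin n} (hk : k ∈ I) :
    uIJ r I J k = 1 - (I.card + J.card : ℝ) / n := by
  have h1 : (k : ℕ) < r := hI k hk
  have h2 : k ∉ J := notmem_J_of_lt hJ h1
  simp [uIJ, h1, hk, h2]; ring

lemma uIJ_apply_mem_J (hI : ∀ i ∈ I, (i : ℕ) < r) (hJ : ∀ j ∈ J, ¬ (j : ℕ) < r)
    {k : Fin n} (hk : k ∈ J) :
    uIJ r I J k = (I.card + J.card : ℝ) / n - 1 := by
  have h1 : ¬ (k : ℕ) < r := hJ k hk
  have h2 : k ∉ I := notmem_I_of_not_lt hI h1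
  simp [uIJ, h1, hk, h2]

lemma uIJ_apply_out_lt {k : Fin n} (hkI : k ∉ I) (hkJ : k ∉ J) (hk : (k : ℕ) < r) :
    uIJ r I J k = -((I.card + J.card : ℝ) / n) := by
  simp [uIJ, hk, hkI, hkJ]

lemma uIJ_apply_out_ge {k : Fin n} (hkI : k ∉ I) (hkJ : k ∉ J) (hk : ¬ (k : ℕ) < r) :
    uIJ r I J k = (I.card + J.card : ℝ) / n := by
  simp [uIJ, hk, hkI, hkJ]

-- uIJ sums along edges
lemma uIJ_sum_S1 (hbip : ∀ i j : Fin n, G.Adj i j → ((i : ℕ) < r ↔ ¬ (j : ℕ) < r))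
    (hI : ∀ i ∈ I, (i : ℕ) < r) (hJ : ∀ j ∈ J, ¬ (j : ℕ) < r)
    {i j : Fin n} (hij : G.Adj i j) (hi : i ∈ S1set I J) (hj : j ∈ S1set I J) :
    uIJ r I J i + uIJ r I J j = 0 := by
  rw [mem_S1set_iff] at hi hj
  rcases hi with hi | hi
  · have hir : (i : ℕ) < r := hI i hi
    have hjr : ¬ (j : ℕ) < r := (hbip i j hij).mp hir
    have hj' : j ∈ J := hj.resolve_left (notmem_I_of_not_lt hI hjr)
    rw [uIJ_apply_mem_I hI hJ hi, uIJ_apply_mem_J hI hJ hj']; ring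
  · have hir : ¬ (i : ℕ) < r := hJ i hi
    have hjr : (j : ℕ) < r := by
      have := hbip i j hij; tauto
    have hj' : j ∈ I := hj.resolve_right (notmem_J_of_lt hJ hjr)
    rw [uIJ_apply_mem_J hI hJ hi, uIJ_apply_mem_I hI hJ hj']; ring

lemma uIJ_sum_S2 (hbip : ∀ i j : Fin n, G.Adj i j → ((i : ℕ) < r ↔ ¬ (j : ℕ) < r))
    (hI : ∀ i ∈ I, (i : ℕ) < r) (hJ : ∀ j ∈ J, ¬ (j : ℕ) < r)
    {i j : Fin n} (hij : G.Adj i j) (hi : i ∈ S2set r I J) (hj : j ∈ S2set r I J) :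
    uIJ r I J i + uIJ r I J j = 0 := by
  rw [mem_S2set_iff hI hJ] at hi hj
  by_cases hir : (i : ℕ) < r
  · have hjr : ¬ (j : ℕ) < r := (hbip i j hij).mp hir
    rw [uIJ_apply_out_lt hi.1 hi.2 hir, uIJ_apply_out_ge hj.1 hj.2 hjr]; ring
  · have hjr : (j : ℕ) < r := by have := hbip i j hij; tauto
    rw [uIJ_apply_out_ge hi.1 hi.2 hir, uIJ_apply_out_lt hj.1 hj.2 hjr]; ring

lemma uIJ_sum_cross (hbip : ∀ i j : Fin n, G.Adj i j → ((i : ℕ) < r ↔ ¬ (j : ℕ) < r))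
    (hI : ∀ i ∈ I, (i : ℕ) < r) (hJ : ∀ j ∈ J, ¬ (j : ℕ) < r)
    {i j : Fin n} (hij : G.Adj i j) (hi : i ∈ S1set I J) (hj : j ∉ S1set I J) :
    uIJ r I J i + uIJ r I J j = 1 ∨ uIJ r I J i + uIJ r I J j = -1 := by
  rw [mem_S1set_iff] at hi
  rw [mem_S1set_iff] at hj
  push_neg at hj
  rcases hi with hi | hi
  · have hir : (i : ℕ) < r := hI i hi
    have hjr : ¬ (j : ℕ) < r := (hbip i j hij).mp hir
    left
    rw [uIJ_apply_mem_I hI hJ hi, uIJ_apply_out_ge hj.1 hj.2 hjr]; ring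
  · have hir : ¬ (i : ℕ) < r := hJ i hi
    have hjr : (j : ℕ) < r := by have := hbip i j hij; tauto
    right
    rw [uIJ_apply_mem_J hI hJ hi, uIJ_apply_out_lt hj.1 hj.2 hjr]; ring

-- cardinality of S1 as a filter
lemma card_filter_S1 (hI : ∀ i ∈ I, (i : ℕ) < r) (hJ : ∀ j ∈ J, ¬ (j : ℕ) < r) :
    (Finset.univ.filter (fun k => k ∈ S1set I J)).card = I.card + J.card := by
  have hdisj : Disjoint I J := by
    rw [Finset.disjoint_left]
    intro k hkI hkJ
    exact hJ k hkJ (hI k hkI)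
  have : Finset.univ.filter (fun k => k ∈ S1set I J) = I ∪ J := by
    ext k
    simp [mem_S1set_iff]
  rw [this, Finset.card_union_of_disjoint hdisj]

lemma phi_uIJ (hn : 0 < n) (hI : ∀ i ∈ I, (i : ℕ) < r) (hJ : ∀ j ∈ J, ¬ (j : ℕ) < r) :
    phi r (uIJ r I J) = 0 := by
  have hcalc : ∀ k : Fin n, uIJ r I J k * eta r k
      = -((I.card + J.card : ℝ)/n) + ((if k ∈ I then 1 else 0) + (if k ∈ J then 1 else 0)) := by
    intro k
    by_cases hk : (k : ℕ) < r
    · have hkJ : k ∉ J := notmem_J_of_lt hJ hk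
      by_cases hkI : k ∈ I <;> simp [uIJ, eta, hk, hkI, hkJ] <;> ring
    · have hkI : k ∉ I := notmem_I_of_not_lt hI hk
      by_cases hkJ : k ∈ J <;> simp [uIJ, eta, hk, hkI, hkJ] <;> ring
  unfold phi
  rw [Finset.sum_congr rfl (fun k _ => hcalc k), Finset.sum_add_distrib,
    Finset.sum_add_distrib]
  simp only [Finset.sum_const, Finset.card_univ, Fintype.card_fin, nsmul_eq_mul,
    Finset.sum_ite_mem, Finset.univ_inter, Finset.sum_const]
  have h1 : ∑ k : Fin n, (if k ∈ I then (1:ℝ) else 0) = I.card := by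
    simp [Finset.sum_ite_mem]
  have h2 : ∑ k : Fin n, (if k ∈ J then (1:ℝ) else 0) = J.card := by
    simp [Finset.sum_ite_mem]
  have hnR : (n : ℝ) ≠ 0 := Nat.cast_ne_zero.mpr hn.ne'
  field_simp
  ring

end UIJ

section Rigid
variable {n : ℕ} {r : ℕ} {G : SimpleGraph (Fin n)} {I J : Finset (Fin n)}

lemma alt_const_on_induce
    (hbip : ∀ i j : Fin n, G.Adj i j → ((i : ℕ) < r ↔ ¬ (j : ℕ) < r))
    {S : Set (Fin n)} (hc : (G.induce S).Connected) {w : Fin n → ℝ}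
    (hcomp : ∀ i j, G.Adj i j → i ∈ S → j ∈ S → w i + w j = 0)
    {x y : Fin n} (hx : x ∈ S) (hy : y ∈ S) :
    w x * eta r x = w y * eta r y := by
  have h : ∀ a b : S, (G.induce S).Adj a b →
      (fun z : S => w (↑z : Fin n) * eta r (↑z : Fin n)) a
        = (fun z : S => w (↑z : Fin n) * eta r (↑z : Fin n)) b := by
    intro a b hab
    have hGab : G.Adj ↑a ↑b := by simpa using hab
    have h1 : w (↑b : Fin n) = - w (↑a : Fin n) := by linarith [hcomp ↑a ↑b hGab a.2 b.2]
    have h2 : eta r (↑b : Fin n) = - eta r (↑a : Fin n) := by linarith [eta_add_eta hbip hGab]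
    simp only
    rw [h1, h2]; ring
  exact const_of_reachable h (hc.preconnected ⟨x, hx⟩ ⟨y, hy⟩)

lemma eq_smul_eta_of_alt {w : Fin n → ℝ} {a : ℝ} {k : Fin n}
    (h : w k * eta r k = a) : w k = a * eta r k := by
  have h2 := eta_mul_self r k
  calc w k = w k * (eta r k * eta r k) := by rw [h2]; ring
    _ = (w k * eta r k) * eta r k := by ring
    _ = a * eta r k := by rw [h]

/-- any vector compatible with the zero pattern of `uIJ` is a multiple of it -/
lemma rigid_of_IJ (hn : 0 < n)
    (hbip : ∀ i j : Fin n, G.Adj i j → ((i : ℕ) < r ↔ ¬ (j : ℕ) < r))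
    (hI : ∀ i ∈ I, (i : ℕ) < r) (hJ : ∀ j ∈ J, ¬ (j : ℕ) < r)
    (hc1 : (G.induce (S1set I J)).Connected)
    (hc2 : (G.induce (S2set r I J)).Connected)
    {w : Fin n → ℝ} (hphiw : phi r w = 0)
    (hcomp1 : ∀ i j, G.Adj i j → i ∈ S1set I J → j ∈ S1set I J → w i + w j = 0)
    (hcomp2 : ∀ i j, G.Adj i j → i ∈ S2set r I J → j ∈ S2set r I J → w i + w j = 0) :
    ∃ t : ℝ, w = t • uIJ r I J := by
  classical
  obtain ⟨⟨x1, hx1⟩⟩ := hc1.nonempty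
  obtain ⟨⟨x2, hx2⟩⟩ := hc2.nonempty
  set a : ℝ := w x1 * eta r x1 with ha
  set d : ℝ := w x2 * eta r x2 with hd
  have hwa : ∀ k ∈ S1set I J, w k = a * eta r k := fun k hk =>
    eq_smul_eta_of_alt (alt_const_on_induce hbip hc1 hcomp1 hk hx1)
  have hwd : ∀ k ∈ S2set r I J, w k = d * eta r k := fun k hk =>
    eq_smul_eta_of_alt (alt_const_on_induce hbip hc2 hcomp2 hk hx2)
  have hcompl := S2set_eq_compl hI hJ
  -- cardinalities
  set s : ℕ := I.card + J.card with hs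
  have hcard1 : (Finset.univ.filter (fun k => k ∈ S1set I J)).card = s :=
    card_filter_S1 hI hJ
  have hcard2 : (Finset.univ.filter (fun k => ¬ k ∈ S1set I J)).card = n - s := by
    have := Finset.card_filter_add_card_filter_not
      (s := (Finset.univ : Finset (Fin n))) (p := fun k => k ∈ S1set I J)
    rw [hcard1, Finset.card_univ, Fintype.card_fin] at this
    omega
  have hsle : s ≤ n := by
    rw [← hcard1]
    calc (Finset.univ.filter (fun k => k ∈ S1set I J)).card
        ≤ (Finset.univ : Finset (Fin n)).card := Finset.card_filter_le _ _
      _ = n := by simp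
  have hslt : s < n := by
    rcases lt_or_eq_of_le hsle with h | h
    · exact h
    · exfalso
      have hx2' : x2 ∉ S1set I J := by
        rw [hcompl] at hx2; exact hx2
      have : (Finset.univ.filter (fun k => ¬ k ∈ S1set I J)).card = 0 := by omega
      rw [Finset.card_eq_zero, Finset.filter_eq_empty_iff] at this
      exact this (Finset.mem_univ x2) hx2'
  -- the balance equation
  have hbal : a * s + d * (n - s : ℕ) = 0 := by
    have hsplit := Finset.sum_filter_add_sum_filter_not Finset.univ
      (fun k => k ∈ S1set I J) (fun k => w k * eta r k)
    have e1 : ∑ k ∈ Finset.univ.filter (fun k => k ∈ S1set I J), w k * eta r k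
        = a * s := by
      have hterm : ∀ k ∈ Finset.univ.filter (fun k => k ∈ S1set I J),
          w k * eta r k = a := by
        intro k hk
        have hk' := (Finset.mem_filter.mp hk).2
        rw [hwa k hk', mul_assoc, eta_mul_self, mul_one]
      rw [Finset.sum_congr rfl hterm, Finset.sum_const, hcard1, nsmul_eq_mul, mul_comm]
    have e2 : ∑ k ∈ Finset.univ.filter (fun k => ¬ k ∈ S1set I J), w k * eta r k
        = d * (n - s : ℕ) := by
      have hterm : ∀ k ∈ Finset.univ.filter (fun k => ¬ k ∈ S1set I J),
          w k * eta r k = d := by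
        intro k hk
        have hk' := (Finset.mem_filter.mp hk).2
        have : k ∈ S2set r I J := by rw [hcompl]; exact hk'
        rw [hwd k this, mul_assoc, eta_mul_self, mul_one]
      rw [Finset.sum_congr rfl hterm, Finset.sum_const, hcard2, nsmul_eq_mul, mul_comm]
    rw [e1, e2] at hsplit
    rw [hsplit]
    exact hphiw
  have hnR : (0:ℝ) < n := by exact_mod_cast hn
  have hnsR : (0:ℝ) < (n:ℝ) - s := by
    have : (s:ℝ) < n := by exact_mod_cast hslt
    linarith
  have hcast : ((n - s : ℕ) : ℝ) = (n:ℝ) - s := by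
    rw [Nat.cast_sub hsle]
  rw [hcast] at hbal
  refine ⟨a * n / ((n:ℝ) - s), funext fun k => ?_⟩
  have hsR : ((I.card + J.card : ℝ)) = (s:ℝ) := by rw [hs]; push_cast; ring
  by_cases hk1 : k ∈ S1set I J
  · have hwk := hwa k hk1
    rcases (mem_S1set_iff k).mp hk1 with hkI | hkJ
    · have hklt : (k : ℕ) < r := hI k hkI
      have : eta r k = 1 := by simp [eta, hklt]
      rw [hwk, this, mul_one]
      simp only [Pi.smul_apply, smul_eq_mul]
      rw [uIJ_apply_mem_I hI hJ hkI, hsR]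
      first
      | (field_simp; ring)
      | field_simp
    · have hklt : ¬ (k : ℕ) < r := hJ k hkJ
      have : eta r k = -1 := by simp [eta, hklt]
      rw [hwk, this]
      simp only [Pi.smul_apply, smul_eq_mul]
      rw [uIJ_apply_mem_J hI hJ hkJ, hsR]
      first
      | (field_simp; ring)
      | field_simp
  · have hk2 : k ∈ S2set r I J := by rw [hcompl]; exact hk1
    have hwk := hwd k hk2
    have hknIJ := (mem_S2set_iff hI hJ k).mp hk2
    by_cases hklt : (k : ℕ) < r
    · have : eta r k = 1 := by simp [eta, hklt]
      rw [hwk, this, mul_one]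
      simp only [Pi.smul_apply, smul_eq_mul]
      rw [uIJ_apply_out_lt hknIJ.1 hknIJ.2 hklt, hsR]
      have hd' : d = - a * s / ((n:ℝ) - s) := by
        field_simp
        linarith [hbal]
      rw [hd']
      first
      | (field_simp; ring)
      | field_simp
    · have : eta r k = -1 := by simp [eta, hklt]
      rw [hwk, this]
      simp only [Pi.smul_apply, smul_eq_mul]
      rw [uIJ_apply_out_ge hknIJ.1 hknIJ.2 hklt, hsR]
      have hd' : d = - a * s / ((n:ℝ) - s) := by
        field_simp
        linarith [hbal]
      rw [hd']
      first
      | (field_simp; ring)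
      | field_simp

end Rigid

section Backward
variable {n : ℕ} {r : ℕ} {G : SimpleGraph (Fin n)} {I J : Finset (Fin n)}

lemma uIJ_ne_zero (hn : 0 < n) (hI : ∀ i ∈ I, (i : ℕ) < r) (hJ : ∀ j ∈ J, ¬ (j : ℕ) < r)
    {x1 x2 : Fin n} (hx1 : x1 ∈ S1set I J) (hx2 : x2 ∈ S2set r I J) :
    uIJ r I J x2 ≠ 0 := by
  have hs1 : 1 ≤ I.card + J.card := by
    rcases (mem_S1set_iff x1).mp hx1 with h | h
    · have := Finset.card_pos.mpr ⟨x1, h⟩; omega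
    · have := Finset.card_pos.mpr ⟨x1, h⟩; omega
  have hx2' := (mem_S2set_iff hI hJ x2).mp hx2
  have hpos : (0:ℝ) < (I.card + J.card : ℝ) / n := by
    apply div_pos
    · exact_mod_cast Nat.cast_pos.mpr (by omega : 0 < I.card + J.card)
    · exact_mod_cast hn
  by_cases hlt : (x2 : ℕ) < r
  · rw [uIJ_apply_out_lt hx2'.1 hx2'.2 hlt]
    intro h
    rw [neg_eq_zero] at h
    linarith
  · rw [uIJ_apply_out_ge hx2'.1 hx2'.2 hlt]
    linarith

lemma backward_dir
    (hconn : G.Connected)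
    (hbip : ∀ i j : Fin n, G.Adj i j → ((i : ℕ) < r ↔ ¬ (j : ℕ) < r))
    (hI : ∀ i ∈ I, (i : ℕ) < r) (hJ : ∀ j ∈ J, ¬ (j : ℕ) < r)
    (hc1 : (G.induce ((I : Set (Fin n)) ∪ (J : Set (Fin n)))).Connected)
    (hc2 : (G.induce (({k : Fin n | (k : ℕ) < r} \ (I : Set (Fin n))) ∪
        ({k : Fin n | ¬ (k : ℕ) < r} \ (J : Set (Fin n))))).Connected)
    {u : Fin n → ℝ}
    (hpe : PosEq (uIJ r I J) u ∨ PosEq (-(uIJ r I J)) u) :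
    Indecomp (edgeVecs G) u := by
  classical
  have hn : 0 < n := by
    have : Nonempty (Fin n) := hconn.nonempty
    exact Fin.pos this.some
  have hc1' : (G.induce (S1set I J)).Connected := hc1
  have hc2' : (G.induce (S2set r I J)).Connected := hc2
  obtain ⟨⟨x1, hx1⟩⟩ := hc1'.nonempty
  obtain ⟨⟨x2, hx2⟩⟩ := hc2'.nonempty
  have hvne : uIJ r I J x2 ≠ 0 := uIJ_ne_zero hn hI hJ hx1 hx2
  -- extract the scalar : u = c • uIJ with c ≠ 0
  obtain ⟨c, hc0, hcu⟩ : ∃ c : ℝ, c ≠ 0 ∧ u = c • uIJ r I J := by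
    rcases hpe with ⟨c, hc, rfl⟩ | ⟨c, hc, rfl⟩
    · exact ⟨c, hc.ne', rfl⟩
    · refine ⟨-c, by intro h; exact hc.ne' (by linarith), ?_⟩
      funext k; simp
  -- u ≠ 0
  have hune : u ≠ 0 := by
    intro h
    have := congrFun h x2
    rw [hcu] at this
    simp only [Pi.smul_apply, smul_eq_mul, Pi.zero_apply] at this
    exact hvne ((mul_eq_zero.mp this).resolve_left hc0)
  -- u ∈ span
  have humem : u ∈ Submodule.span ℝ (edgeVecs G) := by
    rw [mem_span_edgeVecs_iff hconn hbip, hcu, phi_smul, phi_uIJ hn hI hJ, mul_zero]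
  refine ⟨hune, humem, not_decomp_of_rigid humem hune ?_⟩
  intro u' hmem' hcomp'
  have hphiu' : phi r u' = 0 := (mem_span_edgeVecs_iff hconn hbip u').mp hmem'
  -- compatibility: edges inside S1 or S2 have u-sum zero
  have hzero : ∀ i j, G.Adj i j → uIJ r I J i + uIJ r I J j = 0 → u i + u j = 0 := by
    intro i j hij h0
    rw [hcu]
    simp only [Pi.smul_apply, smul_eq_mul]
    linear_combination c * h0
  have hcomp1 : ∀ i j, G.Adj i j → i ∈ S1set I J → j ∈ S1set I J → u' i + u' j = 0 := by
    intro i j hij hi hj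
    exact hcomp' i j hij (hzero i j hij (uIJ_sum_S1 hbip hI hJ hij hi hj))
  have hcomp2 : ∀ i j, G.Adj i j → i ∈ S2set r I J → j ∈ S2set r I J → u' i + u' j = 0 := by
    intro i j hij hi hj
    exact hcomp' i j hij (hzero i j hij (uIJ_sum_S2 hbip hI hJ hij hi hj))
  obtain ⟨t, ht⟩ := rigid_of_IJ hn hbip hI hJ hc1' hc2' hphiu' hcomp1 hcomp2
  refine ⟨t / c, ?_⟩
  rw [ht, hcu]
  funext k
  simp only [Pi.smul_apply, smul_eq_mul]
  field_simp

end Backward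

/-- the spanning subgraph of edges on which `u` sums to zero -/
def zeroGraph {n : ℕ} (G : SimpleGraph (Fin n)) (u : Fin n → ℝ) : SimpleGraph (Fin n) where
  Adj i j := G.Adj i j ∧ u i + u j = 0
  symm := ⟨by rintro i j ⟨h1, h2⟩; exact ⟨h1.symm, by linarith⟩⟩
  loopless := ⟨by rintro i ⟨h1, _⟩; exact G.irrefl h1⟩

section Forward
variable {n : ℕ} {r : ℕ} {G : SimpleGraph (Fin n)}

set_option maxHeartbeats 1600000 in
lemma forward_dir
    (hconn : G.Connected)
    (hbip : ∀ i j : Fin n, G.Adj i j → ((i : ℕ) < r ↔ ¬ (j : ℕ) < r))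
    {u : Fin n → ℝ} (hu : Indecomp (edgeVecs G) u) :
    ∃ I J : Finset (Fin n), (∀ i ∈ I, (i : ℕ) < r) ∧ (∀ j ∈ J, ¬ (j : ℕ) < r) ∧
      (G.induce ((I : Set (Fin n)) ∪ (J : Set (Fin n)))).Connected ∧
      (G.induce (({k : Fin n | (k : ℕ) < r} \ (I : Set (Fin n))) ∪
        ({k : Fin n | ¬ (k : ℕ) < r} \ (J : Set (Fin n))))).Connected ∧
      (PosEq (uIJ r I J) u ∨ PosEq (-(uIJ r I J)) u) := by
  classical
  obtain ⟨hune, humem, hnd⟩ := hu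
  have hn : 0 < n := Fin.pos hconn.nonempty.some
  have hphiu : phi r u = 0 := (mem_span_edgeVecs_iff hconn hbip u).mp humem
  -- rigidity from indecomposability
  have hV0 : ∀ w : Fin n → ℝ, phi r w = 0 →
      (∀ i j, G.Adj i j → u i + u j = 0 → w i + w j = 0) → ∃ t : ℝ, w = t • u := by
    intro w hpw hcw
    by_contra hnt
    push_neg at hnt
    exact hnd (decomp_of_extra humem ((mem_span_edgeVecs_iff hconn hbip w).mpr hpw)
      hune hcw hnt)
  set G0 : SimpleGraph (Fin n) := zeroGraph G u with hG0
  set κ : Fin n → G0.ConnectedComponent := G0.connectedComponentMk with hκ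
  have hκadj : ∀ {i j : Fin n}, G0.Adj i j → κ i = κ j := fun h =>
    SimpleGraph.ConnectedComponent.sound h.reachable
  -- `u k * eta r k` is constant on components
  have hcconst : ∀ {x y : Fin n}, κ x = κ y → u x * eta r x = u y * eta r y := by
    intro x y hxy
    refine const_of_reachable (f := fun k => u k * eta r k) ?_
      (SimpleGraph.ConnectedComponent.exact hxy)
    intro i j hij
    have h1 : u j = - u i := by linarith [hij.2]
    have h2 : eta r j = - eta r i := by linarith [eta_add_eta hbip hij.1]
    simp only [h1, h2]; ring
  -- component indicator vectors
  set wc : G0.ConnectedComponent → Fin n → ℝ :=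
    fun q k => if κ k = q then eta r k else 0 with hwc
  set Nc : G0.ConnectedComponent → ℕ :=
    fun q => (Finset.univ.filter (fun k => κ k = q)).card with hNc
  have hphiwc : ∀ q, phi r (wc q) = Nc q := by
    intro q
    unfold phi
    have : ∀ k : Fin n, wc q k * eta r k = if κ k = q then 1 else 0 := by
      intro k
      simp only [hwc]
      by_cases h : κ k = q
      · simp [h, eta_mul_self]
      · simp [h]
    rw [Finset.sum_congr rfl (fun k _ => this k), Finset.sum_boole, hNc]
  have hwcsum : ∀ q i j, G.Adj i j → κ i = κ j → wc q i + wc q j = 0 := by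
    intro q i j hij hκij
    simp only [hwc]
    by_cases h : κ i = q
    · rw [if_pos h, if_pos (hκij ▸ h)]
      exact eta_add_eta hbip hij
    · rw [if_neg h, if_neg (fun hc => h (hκij ▸ hc))]
      norm_num
  have hNcpos : ∀ p : Fin n, 0 < Nc (κ p) := by
    intro p
    rw [hNc]
    exact Finset.card_pos.mpr ⟨p, by simp⟩
  -- the key vanishing consequence of rigidity for three distinct components
  have hzero_off : ∀ pa pb : Fin n, κ pa ≠ κ pb →
      ∀ k, κ k ≠ κ pa → κ k ≠ κ pb → u k = 0 := by
    intro pa pb hab k hka hkb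
    set w : Fin n → ℝ := (Nc (κ pb) : ℝ) • wc (κ pa) - (Nc (κ pa) : ℝ) • wc (κ pb) with hw
    have hphiw : phi r w = 0 := by
      rw [hw, phi_sub, phi_smul, phi_smul, hphiwc, hphiwc]; ring
    have hcompw : ∀ i j, G.Adj i j → u i + u j = 0 → w i + w j = 0 := by
      intro i j hij h0
      have hκij : κ i = κ j := hκadj ⟨hij, h0⟩
      have h1 := hwcsum (κ pa) i j hij hκij
      have h2 := hwcsum (κ pb) i j hij hκij
      rw [hw]
      simp only [Pi.sub_apply, Pi.smul_apply, smul_eq_mul]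
      linear_combination (Nc (κ pb) : ℝ) * h1 - (Nc (κ pa) : ℝ) * h2
    obtain ⟨t, ht⟩ := hV0 w hphiw hcompw
    have hwpa : w pa = (Nc (κ pb) : ℝ) * eta r pa := by
      simp only [hw, Pi.sub_apply, Pi.smul_apply, smul_eq_mul, hwc]
      rw [if_neg hab]
      simp
    have hwk : w k = 0 := by
      simp only [hw, Pi.sub_apply, Pi.smul_apply, smul_eq_mul, hwc]
      rw [if_neg hka, if_neg hkb]
      ring
    have htne : t ≠ 0 := by
      intro h0
      have h1 := congrFun ht pa
      simp only [Pi.smul_apply, smul_eq_mul, h0, zero_mul] at h1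
      rw [hwpa] at h1
      have hNb : (0:ℝ) < Nc (κ pb) := by exact_mod_cast hNcpos pb
      have hη := eta_ne_zero r pa
      rcases mul_eq_zero.mp h1 with h | h
      · linarith
      · exact hη h
    have h2 := congrFun ht k
    simp only [Pi.smul_apply, smul_eq_mul] at h2
    rw [hwk] at h2
    rcases mul_eq_zero.mp h2.symm with h | h
    · exact absurd h htne
    · exact h
  -- u is nonzero somewhere
  obtain ⟨p0, hp0⟩ : ∃ k, u k ≠ 0 := by
    by_contra hk
    push_neg at hk
    exact hune (funext fun k => hk k)
  -- there are at least two components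
  obtain ⟨p1, hp01⟩ : ∃ p1, κ p1 ≠ κ p0 := by
    by_contra hall
    push_neg at hall
    have : phi r u = n * (u p0 * eta r p0) := by
      unfold phi
      rw [Finset.sum_congr rfl (fun k _ => hcconst (hall k))]
      simp [Finset.sum_const, mul_comm]
    rw [hphiu] at this
    have hη := eta_ne_zero r p0
    have : u p0 * eta r p0 = 0 := by
      have hnR : (0:ℝ) < n := by exact_mod_cast hn
      rcases mul_eq_zero.mp this.symm with h | h
      · exfalso; linarith
      · exact h
    rcases mul_eq_zero.mp this with h | h
    · exact hp0 h
    · exact hη h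
  -- there are at most two components
  have hall : ∀ k, κ k = κ p0 ∨ κ k = κ p1 := by
    by_contra hk
    push_neg at hk
    obtain ⟨k2, hk20, hk21⟩ := hk
    apply hune
    funext k
    show u k = 0
    rcases eq_or_ne (κ k) (κ p0) with h0 | h0
    · refine hzero_off p1 k2 (fun h => hk21 h.symm) k ?_ ?_
      · rw [h0]; exact hp01.symm
      · rw [h0]; exact fun h => hk20 h.symm
    · rcases eq_or_ne (κ k) (κ p1) with h1 | h1
      · refine hzero_off p0 k2 (fun h => hk20 h.symm) k ?_ ?_
        · rw [h1]; exact hp01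
        · rw [h1]; exact fun h => hk21 h.symm
      · exact hzero_off p0 p1 (fun h => hp01 h.symm) k h0 h1
  -- general connectivity of induced component sets
  have hCconn : ∀ p : Fin n, (G.induce {k : Fin n | κ k = κ p}).Connected := by
    intro p
    have hcl : ∀ ⦃i j : Fin n⦄, G0.Adj i j → i ∈ {k : Fin n | κ k = κ p} →
        j ∈ {k : Fin n | κ k = κ p} := by
      intro i j hij hi
      exact (hκadj hij).symm.trans hi
    haveI : Nonempty ({k : Fin n | κ k = κ p}) := ⟨⟨p, rfl⟩⟩
    refine ⟨?_⟩
    intro ⟨x, hx⟩ ⟨y, hy⟩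
    have hxy : G0.Reachable x y :=
      SimpleGraph.ConnectedComponent.exact (hx.trans hy.symm)
    obtain ⟨pw⟩ := hxy
    obtain ⟨hy', hreach⟩ := reach_induce (G := G) (G0 := G0) (fun i j h => h.1) hcl pw hx
    exact hreach
  -- the balance equation between the two components
  set a : ℝ := u p0 * eta r p0 with hadef
  set d : ℝ := u p1 * eta r p1 with hddef
  have hane : a ≠ 0 := mul_ne_zero hp0 (eta_ne_zero r p0)
  set N0 : ℕ := Nc (κ p0) with hN0def
  set N1 : ℕ := Nc (κ p1) with hN1def
  have hN0pos : 0 < N0 := hNcpos p0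
  have hN1pos : 0 < N1 := hNcpos p1
  have hfilter_eq : Finset.univ.filter (fun k => κ k = κ p1)
      = Finset.univ.filter (fun k => ¬ κ k = κ p0) := by
    ext k
    simp only [Finset.mem_filter, Finset.mem_univ, true_and]
    constructor
    · intro h h0
      exact hp01 (h.symm.trans h0)
    · intro h
      exact (hall k).resolve_left h
  have hbal : a * N0 + d * N1 = 0 := by
    have hsplit := Finset.sum_filter_add_sum_filter_not Finset.univ
      (fun k => κ k = κ p0) (fun k => u k * eta r k)
    have e1 : ∑ k ∈ Finset.univ.filter (fun k => κ k = κ p0), u k * eta r k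
        = a * N0 := by
      have hterm : ∀ k ∈ Finset.univ.filter (fun k => κ k = κ p0),
          u k * eta r k = a := by
        intro k hk
        exact hcconst (Finset.mem_filter.mp hk).2
      rw [Finset.sum_congr rfl hterm, Finset.sum_const, nsmul_eq_mul, mul_comm,
        hN0def, hNc]
    have e2 : ∑ k ∈ Finset.univ.filter (fun k => ¬ κ k = κ p0), u k * eta r k
        = d * N1 := by
      have hterm : ∀ k ∈ Finset.univ.filter (fun k => ¬ κ k = κ p0),
          u k * eta r k = d := by
        intro k hk
        have hk' := (Finset.mem_filter.mp hk).2
        exact hcconst ((hall k).resolve_left hk')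
      rw [Finset.sum_congr rfl hterm, Finset.sum_const, nsmul_eq_mul, mul_comm,
        ← hfilter_eq, hN1def, hNc]
    rw [e1, e2] at hsplit
    rw [hsplit]
    exact hphiu
  -- the main construction, parametrized by which component carries the positive value
  have key : ∀ p q : Fin n, κ q ≠ κ p → (∀ k, κ k = κ p ∨ κ k = κ q) →
      0 < u p * eta r p →
      ∃ I J : Finset (Fin n), (∀ i ∈ I, (i : ℕ) < r) ∧ (∀ j ∈ J, ¬ (j : ℕ) < r) ∧
        (G.induce ((I : Set (Fin n)) ∪ (J : Set (Fin n)))).Connected ∧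
        (G.induce (({k : Fin n | (k : ℕ) < r} \ (I : Set (Fin n))) ∪
          ({k : Fin n | ¬ (k : ℕ) < r} \ (J : Set (Fin n))))).Connected ∧
        (PosEq (uIJ r I J) u ∨ PosEq (-(uIJ r I J)) u) := by
    intro p q hqp hall' hap
    set I : Finset (Fin n) :=
      Finset.univ.filter (fun k => κ k = κ p ∧ (k : ℕ) < r) with hIdef
    set J : Finset (Fin n) :=
      Finset.univ.filter (fun k => κ k = κ p ∧ ¬ (k : ℕ) < r) with hJdef
    have hIr : ∀ i ∈ I, (i : ℕ) < r := by
      intro i hi; exact (Finset.mem_filter.mp hi).2.2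
    have hJr : ∀ j ∈ J, ¬ (j : ℕ) < r := by
      intro j hj; exact (Finset.mem_filter.mp hj).2.2
    have hS1 : ((I : Set (Fin n)) ∪ (J : Set (Fin n))) = {k : Fin n | κ k = κ p} := by
      ext k
      simp only [hIdef, hJdef, Set.mem_union, Finset.mem_coe, Finset.mem_filter,
        Finset.mem_univ, true_and, Set.mem_setOf_eq]
      tauto
    have hS2 : (({k : Fin n | (k : ℕ) < r} \ (I : Set (Fin n))) ∪
        ({k : Fin n | ¬ (k : ℕ) < r} \ (J : Set (Fin n)))) = {k : Fin n | κ k = κ q} := by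
      ext k
      have hiff : (¬ κ k = κ p) ↔ κ k = κ q :=
        ⟨fun h => (hall' k).resolve_left h, fun h hp => hqp (h.symm.trans hp)⟩
      simp only [hIdef, hJdef, Set.mem_union, Set.mem_diff, Finset.mem_coe,
        Finset.mem_filter, Finset.mem_univ, true_and, Set.mem_setOf_eq]
      by_cases hkr : (k : ℕ) < r <;> simp only [hkr] <;> tauto
    have hc1 : (G.induce ((I : Set (Fin n)) ∪ (J : Set (Fin n)))).Connected :=
      hS1.symm ▸ (hCconn p)
    have hc2 : (G.induce (({k : Fin n | (k : ℕ) < r} \ (I : Set (Fin n))) ∪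
        ({k : Fin n | ¬ (k : ℕ) < r} \ (J : Set (Fin n))))).Connected :=
      hS2.symm ▸ (hCconn q)
    -- apply rigidity with respect to this decomposition
    have hc1' : (G.induce (S1set I J)).Connected := hc1
    have hc2' : (G.induce (S2set r I J)).Connected := by
      have : S2set r I J = (({k : Fin n | (k : ℕ) < r} \ (I : Set (Fin n))) ∪
        ({k : Fin n | ¬ (k : ℕ) < r} \ (J : Set (Fin n)))) := rfl
      rw [this]
      exact hc2
    have husum : ∀ x y : Fin n, G.Adj x y → κ x = κ y → u x + u y = 0 := by
      intro x y hxy hκxy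
      have h1 : u x * eta r x = u y * eta r y := hcconst hκxy
      have h2 : eta r x + eta r y = 0 := eta_add_eta hbip hxy
      have hx2 := eta_mul_self r x
      have h3 : eta r y = - eta r x := by linarith
      rw [h3] at h1
      have h5 : (u x + u y) * eta r x = 0 := by linear_combination h1
      calc u x + u y = (u x + u y) * (eta r x * eta r x) := by rw [hx2]; ring
        _ = ((u x + u y) * eta r x) * eta r x := by ring
        _ = 0 := by rw [h5]; ring
    have hcomp1 : ∀ i j, G.Adj i j → i ∈ S1set I J → j ∈ S1set I J → u i + u j = 0 := by
      intro i j hij hi hj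
      have hi' : κ i = κ p := by
        rcases (mem_S1set_iff i).mp hi with h | h
        · exact (Finset.mem_filter.mp h).2.1
        · exact (Finset.mem_filter.mp h).2.1
      have hj' : κ j = κ p := by
        rcases (mem_S1set_iff j).mp hj with h | h
        · exact (Finset.mem_filter.mp h).2.1
        · exact (Finset.mem_filter.mp h).2.1
      exact husum i j hij (hi'.trans hj'.symm)
    have hcomp2 : ∀ i j, G.Adj i j → i ∈ S2set r I J → j ∈ S2set r I J → u i + u j = 0 := by
      intro i j hij hi hj
      have hi' : κ i = κ q := by
        have : i ∈ ({k : Fin n | κ k = κ q}) := hS2 ▸ hi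
        exact this
      have hj' : κ j = κ q := by
        have : j ∈ ({k : Fin n | κ k = κ q}) := hS2 ▸ hj
        exact this
      exact husum i j hij (hi'.trans hj'.symm)
    obtain ⟨t, htu⟩ := rigid_of_IJ hn hbip hIr hJr hc1' hc2' hphiu hcomp1 hcomp2
    -- cardinalities
    set s : ℕ := I.card + J.card with hsdef
    have hsN : s = Nc (κ p) := by
      have hIeq : I = (Finset.univ.filter (fun k => κ k = κ p)).filter
          (fun k : Fin n => (k : ℕ) < r) := by
        rw [Finset.filter_filter]
      have hJeq : J = (Finset.univ.filter (fun k => κ k = κ p)).filter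
          (fun k : Fin n => ¬ (k : ℕ) < r) := by
        rw [Finset.filter_filter]
      rw [hsdef, hIeq, hJeq, hNc]
      exact Finset.card_filter_add_card_filter_not (fun k : Fin n => (k : ℕ) < r)
    have hfilter_eq' : Finset.univ.filter (fun k => κ k = κ q)
        = Finset.univ.filter (fun k => ¬ κ k = κ p) := by
      ext k
      simp only [Finset.mem_filter, Finset.mem_univ, true_and]
      exact ⟨fun h h0 => hqp (h.symm.trans h0), fun h => (hall' k).resolve_left h⟩
    have hNsum : Nc (κ p) + Nc (κ q) = n := by
      rw [hNc]
      simp only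
      rw [hfilter_eq']
      rw [Finset.card_filter_add_card_filter_not (fun k => κ k = κ p)]
      simp
    have hslt : s < n := by
      have := hNcpos q
      omega
    -- positivity of the scalar
    have hsnR : (s : ℝ) < n := by exact_mod_cast hslt
    have hnR : (0:ℝ) < n := by exact_mod_cast hn
    have htpos : 0 < t := by
      have hup := congrFun htu p
      simp only [Pi.smul_apply, smul_eq_mul] at hup
      by_cases hpr : (p : ℕ) < r
      · have hpI : p ∈ I := by
          rw [hIdef, Finset.mem_filter]; exact ⟨Finset.mem_univ p, rfl, hpr⟩
        have hval : uIJ r I J p = 1 - (I.card + J.card : ℝ) / n :=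
          uIJ_apply_mem_I hIr hJr hpI
        have hcast : ((I.card + J.card : ℝ)) = (s : ℝ) := by rw [hsdef]; push_cast; ring
        have hvpos : 0 < uIJ r I J p := by
          rw [hval, hcast]
          have hlt : (s:ℝ)/n < 1 := by rw [div_lt_one hnR]; exact hsnR
          linarith
        have hηp : eta r p = 1 := by simp [eta, hpr]
        have hupos : 0 < u p := by
          have := hap; rw [hηp, mul_one] at this; exact this
        nlinarith [hup, hvpos, hupos]
      · have hpJ : p ∈ J := by
          rw [hJdef, Finset.mem_filter]; exact ⟨Finset.mem_univ p, rfl, hpr⟩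
        have hval : uIJ r I J p = (I.card + J.card : ℝ) / n - 1 :=
          uIJ_apply_mem_J hIr hJr hpJ
        have hcast : ((I.card + J.card : ℝ)) = (s : ℝ) := by rw [hsdef]; push_cast; ring
        have hvneg : uIJ r I J p < 0 := by
          rw [hval, hcast]
          have hlt : (s:ℝ)/n < 1 := by rw [div_lt_one hnR]; exact hsnR
          linarith
        have hηp : eta r p = -1 := by simp [eta, hpr]
        have huneg : u p < 0 := by
          have := hap; rw [hηp] at this; nlinarith [this]
        nlinarith [hup, hvneg, huneg]
    exact ⟨I, J, hIr, hJr, hc1, hc2, Or.inl ⟨t, htpos, htu⟩⟩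
  -- choose the component with positive value
  by_cases ha : 0 < a
  · exact key p0 p1 hp01 hall ha
  · have hd : 0 < d := by
      have hN0R : (0:ℝ) < N0 := by exact_mod_cast hN0pos
      have hN1R : (0:ℝ) < N1 := by exact_mod_cast hN1pos
      have haneg : a < 0 := lt_of_le_of_ne (not_lt.mp ha) hane
      nlinarith [hbal]
    exact key p1 p0 (fun h => hp01 h.symm) (fun k => (hall k).symm) hd

end Forward

/-- **Lemma 4.1(I)**: for a connected bipartite graph `G` with bipartition given by
`{i | i < r}` and `{i | i ≥ r}`, the `G`-indecomposable points are exactly the points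
`[± u_{I,J}]` for `I, J` as in the statement. -/
theorem bipartite_G_indecomposable {n : ℕ} (r : ℕ) (hr : r ≤ n)
    (G : SimpleGraph (Fin n)) (hconn : G.Connected)
    (hbip : ∀ i j : Fin n, G.Adj i j → ((i : ℕ) < r ↔ ¬ (j : ℕ) < r)) :
    ∀ u : Fin n → ℝ,
      Indecomp (edgeVecs G) u ↔
        ∃ I J : Finset (Fin n), (∀ i ∈ I, (i : ℕ) < r) ∧ (∀ j ∈ J, ¬ (j : ℕ) < r) ∧
          (G.induce ((I : Set (Fin n)) ∪ (J : Set (Fin n)))).Connected ∧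
          (G.induce (({k : Fin n | (k : ℕ) < r} \ (I : Set (Fin n))) ∪
            ({k : Fin n | ¬ (k : ℕ) < r} \ (J : Set (Fin n))))).Connected ∧
          (PosEq (uIJ r I J) u ∨ PosEq (-(uIJ r I J)) u) := by
  intro u
  constructor
  · exact fun hu => forward_dir hconn hbip hu
  · rintro ⟨I, J, hI, hJ, hc1, hc2, hpe⟩
    exact backward_dir hconn hbip hI hJ hc1 hc2 hpe
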